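/- Let f(t) be the χ²_{k-1} density and F(u) = ∫₀^u f(t) dt. Then the function G(u) = F(u) - 2 f(u)·(u/(k-1))·[B(u/(k+1) - 1) + C(u²/((k+1)(k+3)) - 2u/(k+1) + 1)] has derivative G'(u) = f(u)·(1 + B(u²/((k-1)(k+1)) - 2u/(k-1) + 1) + C(u³/((k-1)(k+1)(k+3)) - 3u²/((k-1)(k+1)) + 3u/(k-1) - 1)) for u > 0, for any real constants B, C and k ≥ 2. -/

import Mathlib

theorem stmt_17 (k : ℕ) (hk : 2 ≤ k) (B C : ℝ)
    (f : ℝ → ℝ)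
    (hf : ∀ t, f t = t ^ (((k : ℝ) - 3) / 2) * Real.exp (-t / 2) /
      (2 ^ (((k : ℝ) - 1) / 2) * Real.Gamma (((k : ℝ) - 1) / 2)))
    (F : ℝ → ℝ) (hF : ∀ u, F u = ∫ t in Set.Ioc (0 : ℝ) u, f t)
    (G : ℝ → ℝ)
    (hG : ∀ u, G u = F u - 2 * f u * (u / ((k : ℝ) - 1)) *
      (B * (u / ((k : ℝ) + 1) - 1) +
       C * (u ^ 2 / (((k : ℝ) + 1) * ((k : ℝ) + 3)) - 2 * u / ((k : ℝ) + 1) + 1)))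
    (u : ℝ) (hu : 0 < u) :
    HasDerivAt G
      (f u * (1 + B * (u ^ 2 / (((k : ℝ) - 1) * ((k : ℝ) + 1)) - 2 * u / ((k : ℝ) - 1) + 1) +
        C * (u ^ 3 / (((k : ℝ) - 1) * ((k : ℝ) + 1) * ((k : ℝ) + 3))
          - 3 * u ^ 2 / (((k : ℝ) - 1) * ((k : ℝ) + 1)) + 3 * u / ((k : ℝ) - 1) - 1))) u := by
  set κ : ℝ := (k : ℝ) with hκ
  have hk2 : (2 : ℝ) ≤ κ := by rw [hκ]; exact_mod_cast hk
  have hk1 : κ - 1 ≠ 0 := by nlinarith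
  have hk1' : κ + 1 ≠ 0 := by nlinarith
  have hk3 : κ + 3 ≠ 0 := by nlinarith
  set p : ℝ := (κ - 3) / 2 with hp
  have hpgt : (-1 : ℝ) < p := by rw [hp]; nlinarith
  set c : ℝ := 2 ^ ((κ - 1) / 2) * Real.Gamma ((κ - 1) / 2) with hc
  -- continuity of f on Ioi 0
  have hfc : ContinuousOn f (Set.Ioi (0 : ℝ)) := by
    have : ContinuousOn (fun t : ℝ => t ^ p * Real.exp (-t / 2) / c) (Set.Ioi 0) := by
      apply ContinuousOn.div_const
      apply ContinuousOn.mul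
      · exact fun x hx => (Real.continuousAt_rpow_const x p (Or.inl (ne_of_gt hx))).continuousWithinAt
      · exact (Real.continuous_exp.comp (continuous_id.neg.div_const 2)).continuousOn
    exact this.congr fun x _ => hf x
  -- derivative of f at u
  have hfd : HasDerivAt f (f u * (p / u - 1 / 2)) u := by
    have h1 : HasDerivAt (fun t : ℝ => t ^ p) (p * u ^ (p - 1)) u :=
      Real.hasDerivAt_rpow_const (Or.inl hu.ne')
    have h2 : HasDerivAt (fun t : ℝ => Real.exp (-t / 2)) (Real.exp (-u / 2) * (-1 / 2)) u := by
      have h0 : HasDerivAt (fun t : ℝ => -t / 2) (-1 / 2 : ℝ) u := by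
        simpa using ((hasDerivAt_id u).neg.div_const 2)
      exact h0.exp
    have h3 := (h1.mul h2).div_const c
    have heq : (fun t : ℝ => t ^ p * Real.exp (-t / 2) / c) = f := by
      funext t; rw [hf t]
    simp only [Pi.mul_apply] at h3
    rw [heq] at h3
    refine h3.congr_deriv ?_
    rw [hf u, Real.rpow_sub hu, Real.rpow_one]
    field_simp
    ring
  -- F has derivative f u at u
  have hFd : HasDerivAt F (f u) u := by
    have hint : IntervalIntegrable f MeasureTheory.volume 0 u := by
      have h1 : IntervalIntegrable (fun t : ℝ => t ^ p) MeasureTheory.volume 0 u :=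
        intervalIntegral.intervalIntegrable_rpow' hpgt
      have h2 : IntervalIntegrable (fun t : ℝ => t ^ p * (Real.exp (-t / 2) / c))
          MeasureTheory.volume 0 u := by
        apply h1.mul_continuousOn
        exact ((Real.continuous_exp.comp (continuous_id.neg.div_const 2)).div_const c).continuousOn
      apply h2.congr
      · intro t _
        rw [hf t]; ring
    have hmeas : StronglyMeasurableAtFilter f (nhds u) MeasureTheory.volume :=
      hfc.stronglyMeasurableAtFilter isOpen_Ioi u hu
    have hcont : ContinuousAt f u := by
      have := hfc u hu
      exact this.continuousAt (isOpen_Ioi.mem_nhds hu)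
    have hd := intervalIntegral.integral_hasDerivAt_right hint hmeas hcont
    have hev : (fun x => ∫ t in (0 : ℝ)..x, f t) =ᶠ[nhds u] F := by
      filter_upwards [isOpen_Ioi.mem_nhds hu] with x hx
      rw [hF x, intervalIntegral.integral_of_le (le_of_lt hx)]
    exact hd.congr_of_eventuallyEq hev.symm
  -- the polynomial factor R
  set R : ℝ → ℝ := fun x => 2 * (x / (κ - 1)) *
      (B * (x / (κ + 1) - 1) +
       C * (x ^ 2 / ((κ + 1) * (κ + 3)) - 2 * x / (κ + 1) + 1)) with hR
  have hRd : HasDerivAt R (2 / (κ - 1) *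
      (B * (u / (κ + 1) - 1) + C * (u ^ 2 / ((κ + 1) * (κ + 3)) - 2 * u / (κ + 1) + 1)) +
      2 * (u / (κ - 1)) * (B / (κ + 1) +
        C * (2 * u / ((κ + 1) * (κ + 3)) - 2 / (κ + 1)))) u := by
    have hA : HasDerivAt (fun x : ℝ => 2 * (x / (κ - 1))) (2 / (κ - 1)) u := by
      simpa [div_eq_mul_inv] using (((hasDerivAt_id u).div_const (κ - 1)).const_mul 2)
    have hB : HasDerivAt (fun x : ℝ => B * (x / (κ + 1) - 1) +
        C * (x ^ 2 / ((κ + 1) * (κ + 3)) - 2 * x / (κ + 1) + 1))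
        (B / (κ + 1) + C * (2 * u / ((κ + 1) * (κ + 3)) - 2 / (κ + 1))) u := by
      have b1 : HasDerivAt (fun x : ℝ => B * (x / (κ + 1) - 1)) (B / (κ + 1)) u := by
        simpa [div_eq_mul_inv] using ((((hasDerivAt_id u).div_const (κ + 1)).sub_const 1).const_mul B)
      have b2 : HasDerivAt (fun x : ℝ => C * (x ^ 2 / ((κ + 1) * (κ + 3)) - 2 * x / (κ + 1) + 1))
          (C * (2 * u / ((κ + 1) * (κ + 3)) - 2 / (κ + 1))) u := by
        have p2 : HasDerivAt (fun x : ℝ => x ^ 2) (2 * u) u := by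
          simpa using hasDerivAt_pow 2 u
        have p3 : HasDerivAt (fun x : ℝ => x ^ 2 / ((κ + 1) * (κ + 3)) - 2 * x / (κ + 1) + 1)
            (2 * u / ((κ + 1) * (κ + 3)) - 2 / (κ + 1)) u := by
          have q1 := p2.div_const ((κ + 1) * (κ + 3))
          have q2 : HasDerivAt (fun x : ℝ => 2 * x / (κ + 1)) (2 / (κ + 1)) u := by
            simpa using (((hasDerivAt_id u).const_mul 2).div_const (κ + 1))
          exact (q1.sub q2).add_const 1
        exact p3.const_mul C
      exact b1.add b2
    exact hA.mul hB
  -- assemble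
  have hGeq : G = fun x => F x - f x * R x := by
    funext x; rw [hG x, hR]; ring
  rw [hGeq]
  have := hFd.sub (hfd.mul hRd)
  refine this.congr_deriv ?_
  rw [hR]
  have hu' : u ≠ 0 := hu.ne'
  field_simp
  ring
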